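/- Let G be a graph with nodes v_1,…,v_n and threshold assignment τ, and let H be the bipartite double cover of G with parts X={x_1,…,x_n}, Y={y_1,…,y_n} and edges x_i y_j for each edge v_i v_j of G, with thresholds τ'(x_i)=τ'(y_i)=τ(v_i). Then the minimum size of a timed target set of (H,τ') equals exactly twice the minimum size of a timed target set of (G,τ). -/

import Mathlib

open Finset
open scoped Classical

variable {V : Type*}

noncomputable def Qseq (G : SimpleGraph V) [Fintype V] (τ : V → ℕ) (S : ℕ → Finset V) :
    ℕ → Finset V
  | 0 => ∅
  | i + 1 => Finset.univ.filter fun v =>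
      τ v ≤ (G.neighborFinset v ∩ (S i ∪ Qseq G τ S i)).card

def IsTTS (G : SimpleGraph V) [Fintype V] (τ : V → ℕ) (S : ℕ → Finset V) (k : ℕ) : Prop :=
  S k = ∅ ∧ Qseq G τ S k = Finset.univ

def ttsSize (S : ℕ → Finset V) (k : ℕ) : ℕ := ∑ i ∈ Finset.range (k + 1), (S i).card

noncomputable def strictMaj (G : SimpleGraph V) [Fintype V] (v : V) : ℕ := (G.degree v + 2) / 2

noncomputable def npStep (G : SimpleGraph V) [Fintype V] (τ : V → ℕ) (A : Finset V) : Finset V :=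
  Finset.univ.filter fun v => τ v ≤ (G.neighborFinset v ∩ A).card

def IsTS (G : SimpleGraph V) [Fintype V] (τ : V → ℕ) (S : Finset V) : Prop :=
  ∃ i : ℕ, (npStep G τ)^[i] S = Finset.univ

noncomputable def MTT (G : SimpleGraph V) [Fintype V] (τ : V → ℕ) : ℕ :=
  sInf {m | ∃ (S : ℕ → Finset V) (k : ℕ), IsTTS G τ S k ∧ ttsSize S k = m}

/-- The bipartite double cover of `G`: vertices `V × Bool`, with `(v,b)` adjacent to
`(u,c)` iff `v` and `u` are adjacent in `G` and `b ≠ c`. -/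
def doubleCover (G : SimpleGraph V) : SimpleGraph (V × Bool) where
  Adj p q := G.Adj p.1 q.1 ∧ p.2 ≠ q.2
  symm := ⟨fun p q h => ⟨h.1.symm, h.2.symm⟩⟩
  loopless := ⟨fun p h => h.2 rfl⟩

section Aux

lemma key1 {α : Type*} [DecidableEq α] [DecidableEq (α × Bool)]
    (N A B : Finset α) (c : Bool) :
    ((N ×ˢ ({c} : Finset Bool)) ∩ (A ×ˢ (Finset.univ : Finset Bool) ∪ B ×ˢ Finset.univ)).card
      = (N ∩ (A ∪ B)).card := by
  apply Finset.card_bij (fun p _ => p.1)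
  · rintro ⟨u, d⟩ hp
    simp only [mem_inter, mem_union, mem_product, mem_singleton, mem_univ, and_true] at hp
    obtain ⟨⟨h1, rfl⟩, h2⟩ := hp
    simp only [mem_inter, mem_union]
    exact ⟨h1, h2⟩
  · rintro ⟨u, d⟩ hp ⟨u', d'⟩ hp' h
    simp only [mem_inter, mem_union, mem_product, mem_singleton, mem_univ, and_true] at hp hp'
    obtain ⟨⟨_, rfl⟩, _⟩ := hp
    obtain ⟨⟨_, rfl⟩, _⟩ := hp'
    simpa using h
  · intro u hu
    simp only [mem_inter, mem_union] at hu
    exact ⟨(u, c), by simp [hu.1, hu.2], rfl⟩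

lemma key2 {α : Type*} [DecidableEq (α × Bool)]
    (N : Finset α) (A : Finset (α × Bool)) (c : Bool)
    [DecidablePred fun u => (u, c) ∈ A] :
    ((N ×ˢ ({c} : Finset Bool)) ∩ A).card = (N.filter fun u => (u, c) ∈ A).card := by
  apply Finset.card_bij (fun p _ => p.1)
  · rintro ⟨u, d⟩ hp
    simp only [mem_inter, mem_product, mem_singleton] at hp
    obtain ⟨⟨h1, rfl⟩, h2⟩ := hp
    simp only [mem_filter]
    exact ⟨h1, h2⟩
  · rintro ⟨u, d⟩ hp ⟨u', d'⟩ hp' h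
    simp only [mem_inter, mem_product, mem_singleton] at hp hp'
    obtain ⟨⟨_, rfl⟩, _⟩ := hp
    obtain ⟨⟨_, rfl⟩, _⟩ := hp'
    simpa using h
  · intro u hu
    simp only [mem_filter] at hu
    exact ⟨(u, c), by simp [mem_inter, mem_product, hu.1, hu.2], rfl⟩

variable [Fintype V] (G : SimpleGraph V) (τ : V → ℕ)

lemma dc_nbr (v : V) (b : Bool) :
    (doubleCover G).neighborFinset (v, b) = G.neighborFinset v ×ˢ {!b} := by
  ext ⟨u, c⟩
  simp only [SimpleGraph.mem_neighborFinset, mem_product, mem_singleton]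
  show (G.Adj v u ∧ b ≠ c) ↔ _
  constructor
  · rintro ⟨h, hne⟩
    refine ⟨h, ?_⟩
    revert hne; cases b <;> cases c <;> simp
  · rintro ⟨h, rfl⟩
    exact ⟨h, by cases b <;> simp⟩

lemma Qseq_lift (S : ℕ → Finset V) (i : ℕ) :
    Qseq (doubleCover G) (fun p => τ p.1) (fun j => S j ×ˢ Finset.univ) i
      = Qseq G τ S i ×ˢ (Finset.univ : Finset Bool) := by
  induction i with
  | zero => simp [Qseq]
  | succ i ih =>
    ext ⟨v, b⟩
    simp only [Qseq, mem_filter, mem_univ, true_and, mem_product, and_true]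
    rw [ih, dc_nbr,
      @key1 V (fun a b => Classical.propDecidable _) (fun a b => Classical.propDecidable _)
        (G.neighborFinset v) (S i) (Qseq G τ S i) (!b)]

/-- Projection of a timed target set of the double cover to the `b`-side. -/
noncomputable def projS (S' : ℕ → Finset (V × Bool)) (b : Bool) (i : ℕ) : Finset V :=
  Finset.univ.filter fun v => (v, b ^^ i.bodd) ∈ S' i

lemma Qseq_proj (S' : ℕ → Finset (V × Bool)) (b : Bool) (i : ℕ) (v : V)
    (hv : (v, b ^^ i.bodd) ∈ Qseq (doubleCover G) (fun p => τ p.1) S' i) :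
    v ∈ Qseq G τ (projS S' b) i := by
  induction i generalizing v with
  | zero => simp [Qseq] at hv
  | succ i ih =>
    simp only [Qseq, mem_filter, mem_univ, true_and] at hv ⊢
    have hb : (Bool.not (b ^^ (i + 1).bodd)) = (b ^^ i.bodd) := by
      rw [Nat.bodd_succ, Bool.xor_not, Bool.not_not]
    rw [dc_nbr, hb,
      @key2 V (fun a b => Classical.propDecidable _) (G.neighborFinset v)
        _ (b ^^ i.bodd)
        (fun u => Classical.propDecidable _)] at hv
    refine le_trans hv (card_le_card ?_)
    intro u hu
    simp only [mem_filter, mem_union] at hu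
    rcases hu with ⟨h1, h2 | h2⟩
    · refine mem_inter.2 ⟨h1, mem_union_left _ ?_⟩
      simp only [projS, mem_filter, mem_univ, true_and]
      exact h2
    · exact mem_inter.2 ⟨h1, mem_union_right _ (ih u h2)⟩

lemma card_split (A : Finset (V × Bool)) (c : Bool) :
    (Finset.univ.filter fun v => (v, c) ∈ A).card
      + (Finset.univ.filter fun v => (v, !c) ∈ A).card = A.card := by
  have h : ∀ d : Bool, (Finset.univ.filter fun v => (v, d) ∈ A).card
      = (A.filter fun p => p.2 = d).card := by
    intro d
    apply Finset.card_bij (fun v _ => (v, d))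
    · intro v hv
      simp only [mem_filter, mem_univ, true_and] at hv
      exact mem_filter.2 ⟨hv, rfl⟩
    · intro a _ a' _ hab; exact congrArg Prod.fst hab
    · rintro ⟨u, d'⟩ hp
      simp only [mem_filter] at hp
      obtain ⟨h1, rfl⟩ := hp
      exact ⟨u, by simp [h1], rfl⟩
  have h2 : (A.filter fun p => p.2 = !c) = (A.filter fun p => ¬ p.2 = c) := by
    apply Finset.filter_congr
    intro p _
    cases hp : p.2 <;> cases c <;> simp [hp]
  rw [h, h, h2, Finset.card_filter_add_card_filter_not]

lemma TG_nonempty (hτ : ∀ v, τ v ≤ G.degree v) :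
    {m | ∃ (S : ℕ → Finset V) (k : ℕ), IsTTS G τ S k ∧ ttsSize S k = m}.Nonempty := by
  classical
  refine ⟨ttsSize (fun i => if i = 0 then Finset.univ else ∅) 1,
    fun i => if i = 0 then Finset.univ else ∅, 1, ⟨by simp, ?_⟩, rfl⟩
  have h : Qseq G τ (fun i => if i = 0 then Finset.univ else ∅) 1
      = Finset.univ.filter fun v =>
          τ v ≤ (G.neighborFinset v ∩ (Finset.univ ∪ ∅)).card := by
    simp [Qseq]
  rw [h]
  apply Finset.eq_univ_of_forall
  intro v
  simp only [mem_filter, mem_univ, true_and, Finset.union_empty, Finset.inter_univ]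
  exact hτ v

end Aux

/-- Theorem 3: For a graph `G` with threshold assignment `τ`, the bipartite
double cover `H` (with thresholds `τ'(x_i) = τ'(y_i) = τ(v_i)`) satisfies
`MTT(H, τ') = 2 ⬝ MTT(G, τ)`. -/
theorem stmt5 [Fintype V] (G : SimpleGraph V) (τ : V → ℕ)
    (hτ : ∀ v, τ v ≤ G.degree v) :
    MTT (doubleCover G) (fun p => τ p.1) = 2 * MTT G τ := by
  classical
  set TG := {m | ∃ (S : ℕ → Finset V) (k : ℕ), IsTTS G τ S k ∧ ttsSize S k = m} with hTG
  set TH := {m | ∃ (S : ℕ → Finset (V × Bool)) (k : ℕ),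
      IsTTS (doubleCover G) (fun p => τ p.1) S k ∧ ttsSize S k = m} with hTH
  have hTGne : TG.Nonempty := TG_nonempty G τ hτ
  -- the lifting construction: any TTS of G lifts to one of H of twice the size
  have lift : ∀ m ∈ TG, 2 * m ∈ TH := by
    rintro m ⟨S, k, ⟨hSk, hQk⟩, hsize⟩
    refine ⟨fun j => S j ×ˢ Finset.univ, k, ⟨by simp [hSk], ?_⟩, ?_⟩
    · rw [Qseq_lift, hQk]
      ext ⟨v, b⟩; simp
    · rw [← hsize]
      unfold ttsSize
      rw [Finset.mul_sum]
      apply Finset.sum_congr rfl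
      intro i _
      rw [card_product]
      simp [mul_comm]
  have hTHne : TH.Nonempty := by
    obtain ⟨m, hm⟩ := hTGne
    exact ⟨2 * m, lift m hm⟩
  apply le_antisymm
  · -- MTT H ≤ 2 * MTT G
    have hmem : MTT G τ ∈ TG := Nat.sInf_mem hTGne
    exact Nat.sInf_le (lift _ hmem)
  · -- 2 * MTT G ≤ MTT H
    have hmem : MTT (doubleCover G) (fun p => τ p.1) ∈ TH := Nat.sInf_mem hTHne
    obtain ⟨S', k, ⟨hSk, hQk⟩, hsize⟩ := hmem
    have hproj : ∀ b : Bool, ttsSize (projS S' b) k ∈ TG := by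
      intro b
      refine ⟨projS S' b, k, ⟨?_, ?_⟩, rfl⟩
      · simp [projS, hSk]
      · apply Finset.eq_univ_of_forall
        intro v
        exact Qseq_proj G τ S' b k v (by rw [hQk]; exact mem_univ _)
    have h1 : MTT G τ ≤ ttsSize (projS S' true) k := Nat.sInf_le (hproj true)
    have h2 : MTT G τ ≤ ttsSize (projS S' false) k := Nat.sInf_le (hproj false)
    have hsum : ttsSize (projS S' false) k + ttsSize (projS S' true) k
        = MTT (doubleCover G) (fun p => τ p.1) := by
      rw [← hsize]
      unfold ttsSize
      rw [← Finset.sum_add_distrib]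
      apply Finset.sum_congr rfl
      intro i _
      have hc := card_split (S' i) (i.bodd)
      simpa [projS, Bool.true_xor, Bool.false_xor] using hc
    omega
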